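/- Let η ∈ (0,2) and x⁺ = x − η·(J*J + τL·I)⁻¹J*v. Then for every y ∈ E₁, ψ(y) = ψ(x⁺) + (L/2)·‖y − x⁺‖² + (1/(2τ))·‖J(y − x⁺)‖² + ((1 − η)/(2τ))·⟨y − x⁺, 2J*v⟩. (Lemma 13: exact expansion of the regularized local model around the scaled Gauss–Newton point.) -/
import Mathlib


open scoped RealInnerProductSpace

/-- `ψ(y) = τ/2 + (L/2)‖y − x‖² + (1/(2τ))‖v + J(y − x)‖²`. -/
noncomputable def psiQ {E₁ E₂ : Type*}
    [NormedAddCommGroup E₁] [InnerProductSpace ℝ E₁]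
    [NormedAddCommGroup E₂] [InnerProductSpace ℝ E₂]
    (J : E₁ →L[ℝ] E₂) (v : E₂) (x : E₁) (τ L : ℝ) (y : E₁) : ℝ :=
  τ / 2 + L / 2 * ‖y - x‖ ^ 2 + 1 / (2 * τ) * ‖v + J (y - x)‖ ^ 2

/-- **Lemma 13.** Exact expansion of the regularized local model around the scaled
Gauss–Newton point `x⁺ = x − η (J*J + τL I)⁻¹ J* v` (encoded by the vector `d` solving
`(J*J + τL I) d = J* v`). -/
theorem local_model_expansion
    {E₁ E₂ : Type*}
    [NormedAddCommGroup E₁] [InnerProductSpace ℝ E₁] [FiniteDimensional ℝ E₁]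
    [NormedAddCommGroup E₂] [InnerProductSpace ℝ E₂] [FiniteDimensional ℝ E₂]
    (J : E₁ →L[ℝ] E₂) (v : E₂) (x : E₁)
    (τ L : ℝ) (hτ : 0 < τ) (hL : 0 < L)
    (η : ℝ) (hη : η ∈ Set.Ioo (0 : ℝ) 2)
    (d : E₁)
    (hd : (ContinuousLinearMap.adjoint J) (J d) + (τ * L) • d
        = (ContinuousLinearMap.adjoint J) v)
    (xp : E₁) (hxp : xp = x - η • d) :
    ∀ y : E₁, psiQ J v x τ L y
      = psiQ J v x τ L xp + L / 2 * ‖y - xp‖ ^ 2 + 1 / (2 * τ) * ‖J (y - xp)‖ ^ 2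
        + (1 - η) / (2 * τ) * ⟪y - xp, (2 : ℝ) • (ContinuousLinearMap.adjoint J) v⟫ := by
  intro y
  have hτ' : τ ≠ 0 := ne_of_gt hτ
  set w := y - xp with hw
  have hx' : xp - x = (-η) • d := by rw [hxp]; simp [neg_smul]
  have hyx : y - x = w + (xp - x) := by rw [hw]; abel
  have h1 : ‖y - x‖ ^ 2 = ‖w‖ ^ 2 + 2 * ⟪w, xp - x⟫ + ‖xp - x‖ ^ 2 := by
    rw [hyx, norm_add_sq_real]
  have h2 : v + J (y - x) = (v + J (xp - x)) + J w := by
    rw [hyx, map_add]; abel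
  have h3 : ‖v + J (y - x)‖ ^ 2
      = ‖v + J (xp - x)‖ ^ 2 + 2 * ⟪J w, v + J (xp - x)⟫ + ‖J w‖ ^ 2 := by
    rw [h2, norm_add_sq_real, real_inner_comm]
  have hJdag : (ContinuousLinearMap.adjoint J) (J d)
      = (ContinuousLinearMap.adjoint J) v - (τ * L) • d := by
    rw [← hd]; abel
  have hcross : ⟪J w, v + J (xp - x)⟫
      = (1 - η) * ⟪w, (ContinuousLinearMap.adjoint J) v⟫ + η * (τ * L) * ⟪w, d⟫ := by
    rw [← ContinuousLinearMap.adjoint_inner_right]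
    rw [hx', map_smul, map_add, map_smul, hJdag]
    simp only [smul_sub, inner_add_right, inner_sub_right, real_inner_smul_right, smul_smul]
    ring
  have hwxp : ⟪w, xp - x⟫ = -η * ⟪w, d⟫ := by
    rw [hx', real_inner_smul_right]
  have htwo : ⟪w, (2 : ℝ) • (ContinuousLinearMap.adjoint J) v⟫
      = 2 * ⟪w, (ContinuousLinearMap.adjoint J) v⟫ := by
    rw [real_inner_smul_right]
  simp only [psiQ, h1, h3, htwo, hcross, hwxp]
  field_simp
  ring
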